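/- Let y* be a feasible solution to SDP_Proj^{r+2} for a projection games instance (L, R, E_Proj, Σ, {π_{i,j}}), where r ≥ 0, let {c_i,x_j} ∈ E_Proj, and suppose that ∑_{(σL,σR)∈π_{i,j}} y*_{{(c_i,σL),(x_j,σR)}} = 1. Then for every pair (σL,σR) ∈ Σ×Σ with (σL,σR) ∉ π_{i,j} and every Ψ ⊆ (L∪R)×Σ with |Ψ| ≤ 2r, it holds that y*_{Ψ∪{(c_i,σL),(x_j,σR)}} = 0. -/

import Mathlib

open Finset

/-- A set of (vertex, label) pairs is *inconsistent* if it assigns two different labels to the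
same vertex. -/
def Inconsistent {W Sg : Type*} (Ψ : Finset (W × Sg)) : Prop :=
  ∃ v σ σ', σ ≠ σ' ∧ (v, σ) ∈ Ψ ∧ (v, σ') ∈ Ψ

/-- Feasibility for the level-`r` Lasserre SDP for projection games (`SDP_Proj^r`) on the
vertex set `W` (`= L ⊕ R`) with alphabet `Sg`: `y ∅ = 1`, the moment matrix
`(y_{Ψ₁ ∪ Ψ₂})_{|Ψ₁|,|Ψ₂| ≤ r}` is positive semidefinite, and for every vertex `v` and all
`Ψ₁, Ψ₂` with `|Ψ₁|, |Ψ₂| ≤ r` one has `∑_{σ} y_{Ψ₁∪Ψ₂∪{(v,σ)}} = y_{Ψ₁∪Ψ₂}`. -/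
def ProjFeasible {W Sg : Type*} [Fintype W] [Fintype Sg] [DecidableEq W] [DecidableEq Sg]
    (r : ℕ) (y : Finset (W × Sg) → ℝ) : Prop :=
  y ∅ = 1 ∧
  (Matrix.of fun Ψ₁ Ψ₂ : {S : Finset (W × Sg) // S.card ≤ r} => y (Ψ₁.1 ∪ Ψ₂.1)).PosSemidef ∧
  ∀ (v : W) (Ψ₁ Ψ₂ : Finset (W × Sg)), Ψ₁.card ≤ r → Ψ₂.card ≤ r →
    ∑ σ : Sg, y ((Ψ₁ ∪ Ψ₂) ∪ {(v, σ)}) = y (Ψ₁ ∪ Ψ₂)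

/-- Claim `pair=0`.  Let `y*` be a feasible solution to `SDP_Proj^{r+2}` for a
projection games instance (`Eproj`, `π`), let `{c_i, x_j} ∈ E_Proj`, and suppose that
`∑_{(σL,σR) ∈ π_{i,j}} y*_{{(c_i,σL),(x_j,σR)}} = 1`.  Then for every `(σL, σR) ∉ π_{i,j}` and
every `Ψ` with `|Ψ| ≤ 2r`, `y*_{Ψ ∪ {(c_i,σL),(x_j,σR)}} = 0`. -/
lemma psd_diag_nonneg {n : Type*} [Fintype n] [DecidableEq n] {M : Matrix n n ℝ}
    (h : M.PosSemidef) (i : n) : 0 ≤ M i i := by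
  have := h.dotProduct_mulVec_nonneg (Pi.single i 1)
  simpa [Matrix.mulVec, dotProduct, Pi.single_apply] using this

lemma psd_zero_row {n : Type*} [Fintype n] [DecidableEq n] {M : Matrix n n ℝ}
    (h : M.PosSemidef) (i j : n) (hii : M i i = 0) : M i j = 0 := by
  have hsym : M j i = M i j := by
    have h1 := h.1
    rw [Matrix.IsHermitian] at h1
    conv_lhs => rw [← h1]
    simp [Matrix.conjTranspose_apply]
  have key : ∀ a : ℝ, 0 ≤ 2 * a * M i j + M j j := by
    intro a
    have hq := h.dotProduct_mulVec_nonneg (a • (Pi.single i (1:ℝ) : n → ℝ) + (Pi.single j (1:ℝ) : n → ℝ))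
    simp only [star_trivial, Matrix.mulVec_add, Matrix.mulVec_smul,
      Matrix.mulVec_single, mul_one, dotProduct_add, add_dotProduct,
      smul_dotProduct, dotProduct_smul, single_dotProduct,
      one_mul, smul_eq_mul, MulOpposite.op_one, one_smul, Matrix.col_apply] at hq
    rw [hii, hsym] at hq
    nlinarith [hq]
  by_contra hne
  have h2 : (2:ℝ) * M i j ≠ 0 := mul_ne_zero two_ne_zero hne
  have hk := key ((-(M j j) - 1) / (2 * M i j))
  have heq : 2 * ((-(M j j) - 1) / (2 * M i j)) * M i j = -(M j j) - 1 := by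
    field_simp
  linarith

theorem projection_sdp_pair_eq_zero
    {L R Sg : Type*} [Fintype L] [Fintype R] [Fintype Sg]
    [DecidableEq L] [DecidableEq R] [DecidableEq Sg]
    (Eproj : Finset (L × R)) (π : L → R → Sg → Sg)
    (r : ℕ) (ystar : Finset ((L ⊕ R) × Sg) → ℝ)
    (hfeas : ProjFeasible (r + 2) ystar)
    (ci : L) (xj : R) (he : (ci, xj) ∈ Eproj)
    (hsat : ∑ σL : Sg, ystar {(Sum.inl ci, σL), (Sum.inr xj, π ci xj σL)} = 1)
    (σL σR : Sg) (hnot : σR ≠ π ci xj σL)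
    (Ψ : Finset ((L ⊕ R) × Sg)) (hΨ : Ψ.card ≤ 2 * r) :
    ystar (Ψ ∪ {(Sum.inl ci, σL), (Sum.inr xj, σR)}) = 0 := by
  obtain ⟨h0, hM, hc⟩ := hfeas
  -- nonnegativity of small moments
  have ynn : ∀ S : Finset ((L ⊕ R) × Sg), S.card ≤ r + 2 → 0 ≤ ystar S := by
    intro S hS
    have := psd_diag_nonneg hM ⟨S, hS⟩
    simpa [Finset.union_self] using this
  -- zero propagation
  have yzero : ∀ A B : Finset ((L ⊕ R) × Sg), A.card ≤ r + 2 → B.card ≤ r + 2 →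
      ystar A = 0 → ystar (A ∪ B) = 0 := by
    intro A B hA hB hA0
    have := psd_zero_row hM ⟨A, hA⟩ ⟨B, hB⟩ (by simpa [Finset.union_self] using hA0)
    simpa using this
  -- total mass over pairs
  have hsum1 : ∑ σ : Sg, ystar {(Sum.inl ci, σ)} = 1 := by
    have := hc (Sum.inl ci) ∅ ∅ (by simp) (by simp)
    simpa [h0] using this
  have hsum2 : ∀ σ' : Sg,
      ∑ σ : Sg, ystar {(Sum.inl ci, σ'), (Sum.inr xj, σ)} = ystar {(Sum.inl ci, σ')} := by
    intro σ'
    have := hc (Sum.inr xj) {(Sum.inl ci, σ')} ∅ (by simp) (by simp)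
    simpa using this
  have htot : ∑ σ' : Sg, ∑ σ : Sg, ystar {(Sum.inl ci, σ'), (Sum.inr xj, σ)} = 1 := by
    simp only [hsum2]; exact hsum1
  -- nonnegativity of each pair term
  have hpnn : ∀ σ' σ : Sg, 0 ≤ ystar {(Sum.inl ci, σ'), (Sum.inr xj, σ)} := by
    intro σ' σ
    refine ynn _ ?_
    calc ({(Sum.inl ci, σ'), (Sum.inr xj, σ)} : Finset ((L ⊕ R) × Sg)).card
        ≤ ({(Sum.inr xj, σ)} : Finset ((L ⊕ R) × Sg)).card + 1 := Finset.card_insert_le _ _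
      _ ≤ r + 2 := by simp
  -- the off-relation terms sum to zero
  have hzero : ∑ σ' : Sg, ∑ σ ∈ Finset.univ.erase (π ci xj σ'),
      ystar {(Sum.inl ci, σ'), (Sum.inr xj, σ)} = 0 := by
    have hsplit : ∀ σ' : Sg,
        ∑ σ ∈ Finset.univ.erase (π ci xj σ'),
          ystar {(Sum.inl ci, σ'), (Sum.inr xj, σ)}
        = (∑ σ : Sg, ystar {(Sum.inl ci, σ'), (Sum.inr xj, σ)})
          - ystar {(Sum.inl ci, σ'), (Sum.inr xj, π ci xj σ')} := by
      intro σ'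
      have := Finset.sum_erase_add Finset.univ
        (fun σ => ystar {(Sum.inl ci, σ'), (Sum.inr xj, σ)})
        (Finset.mem_univ (π ci xj σ'))
      linarith
    simp only [hsplit]
    rw [Finset.sum_sub_distrib, htot, hsat]
    ring
  -- hence the single off-relation pair is zero
  have hP : ystar {(Sum.inl ci, σL), (Sum.inr xj, σR)} = 0 := by
    have houter : ∀ σ' ∈ (Finset.univ : Finset Sg),
        0 ≤ ∑ σ ∈ Finset.univ.erase (π ci xj σ'),
          ystar {(Sum.inl ci, σ'), (Sum.inr xj, σ)} :=
      fun σ' _ => Finset.sum_nonneg fun σ _ => hpnn σ' σ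
    have hinner0 := (Finset.sum_eq_zero_iff_of_nonneg houter).mp hzero σL (Finset.mem_univ _)
    have := (Finset.sum_eq_zero_iff_of_nonneg
      (fun σ _ => hpnn σL σ)).mp hinner0 σR (Finset.mem_erase.mpr ⟨hnot, Finset.mem_univ _⟩)
    exact this
  set P : Finset ((L ⊕ R) × Sg) := {(Sum.inl ci, σL), (Sum.inr xj, σR)} with hPdef
  have hPcard : P.card ≤ 2 := by
    calc P.card ≤ ({(Sum.inr xj, σR)} : Finset ((L ⊕ R) × Sg)).card + 1 := Finset.card_insert_le _ _
      _ ≤ 2 := by simp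
  -- split Ψ into two halves of size ≤ r
  obtain ⟨Ψ₁, Ψ₂, hu, h1, h2⟩ :
      ∃ Ψ₁ Ψ₂ : Finset ((L ⊕ R) × Sg), Ψ₁ ∪ Ψ₂ = Ψ ∧ Ψ₁.card ≤ r ∧ Ψ₂.card ≤ r := by
    rcases le_or_gt Ψ.card r with h | h
    · exact ⟨Ψ, ∅, by simp, h, by simp⟩
    · obtain ⟨Ψ₁, hsub, hcard⟩ := Finset.exists_subset_card_eq h.le
      refine ⟨Ψ₁, Ψ \ Ψ₁, Finset.union_sdiff_of_subset hsub, hcard.le, ?_⟩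
      rw [Finset.card_sdiff_of_subset hsub, hcard]
      omega
  have hA : ystar (Ψ₁ ∪ P) = 0 := by
    have := yzero P Ψ₁ (by omega) (by omega) hP
    rwa [Finset.union_comm] at this
  have hfin : ystar ((Ψ₁ ∪ P) ∪ (Ψ₂ ∪ P)) = 0 := by
    refine yzero _ _ ?_ ?_ hA
    · calc (Ψ₁ ∪ P).card ≤ Ψ₁.card + P.card := Finset.card_union_le _ _
        _ ≤ r + 2 := by omega
    · calc (Ψ₂ ∪ P).card ≤ Ψ₂.card + P.card := Finset.card_union_le _ _
        _ ≤ r + 2 := by omega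
  have hset : (Ψ₁ ∪ P) ∪ (Ψ₂ ∪ P) = Ψ ∪ P := by
    rw [Finset.union_union_union_comm, Finset.union_self, hu]
  rwa [hset] at hfin
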